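/- Let n ∈ ℤ∖{0}. Every element of the Baumslag–Solitar group BS(1,n) can be written in the form t^u·a^w·t^{−v} for suitable u,v ∈ ℤ≥0 and w ∈ ℤ; in particular, every element of BS(1,n) is conjugate in BS(1,n) to an element of the form t^u·a^v with u,v ∈ ℤ. The same two statements hold in H(n,r,s) for any integers r,s > 0 with n^r ≡ 1 (mod s). -/
import Mathlib


/-- The Baumslag–Solitar relations for `BS(m,n)`: one relation `t⁻¹ aᵐ t a⁻ⁿ`. -/
def BSrels (m n : ℤ) : Set (FreeGroup Bool) :=
  {(FreeGroup.of true)⁻¹ * (FreeGroup.of false) ^ m * FreeGroup.of true *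
    (FreeGroup.of false) ^ (-n)}

/-- The Baumslag–Solitar group `BS(m,n) = ⟨a, t ∣ t⁻¹ aᵐ t = aⁿ⟩`. -/
def BS (m n : ℤ) : Type := PresentedGroup (BSrels m n)

instance (m n : ℤ) : Group (BS m n) :=
  inferInstanceAs (Group (PresentedGroup (BSrels m n)))

/-- The generator `a` of `BS(m,n)`. -/
def BSa (m n : ℤ) : BS m n := PresentedGroup.of false

/-- The generator `t` of `BS(m,n)`. -/
def BSt (m n : ℤ) : BS m n := PresentedGroup.of true

/-- The relations of `H(n,r,s)`: `t⁻¹ a t a⁻ⁿ`, `tʳ`, `aˢ`. -/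
def Hrels (n r s : ℤ) : Set (FreeGroup Bool) :=
  {(FreeGroup.of true)⁻¹ * FreeGroup.of false * FreeGroup.of true * (FreeGroup.of false) ^ (-n),
   (FreeGroup.of true) ^ r, (FreeGroup.of false) ^ s}

/-- The group `H(n,r,s) = ⟨a, t ∣ t⁻¹ a t = aⁿ, tʳ = 1, aˢ = 1⟩`. -/
def Hgrp (n r s : ℤ) : Type := PresentedGroup (Hrels n r s)

instance (n r s : ℤ) : Group (Hgrp n r s) :=
  inferInstanceAs (Group (PresentedGroup (Hrels n r s)))

/-- The generator `a` of `H(n,r,s)`. -/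
def Ha (n r s : ℤ) : Hgrp n r s := PresentedGroup.of false

/-- The generator `t` of `H(n,r,s)`. -/
def Ht (n r s : ℤ) : Hgrp n r s := PresentedGroup.of true

/-- A class of groups: a predicate on (Type-0) groups. -/
def GroupClass : Type 1 := ∀ (G : Type) [Group G], Prop

/-- A class of groups consists only of periodic (torsion) groups. -/
def PeriodicClass (C : GroupClass) : Prop :=
  ∀ (G : Type) [Group G], C G → ∀ g : G, IsOfFinOrder g

/-- `C` is a root class: closed under isomorphism, contains a non-trivial group, closed under
subgroups, extensions and unrestricted direct products `∏_{y ∈ Y} X` with `X, Y ∈ C`. -/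
structure IsRootClass (C : GroupClass) : Prop where
  iso_closed : ∀ (G H : Type) [Group G] [Group H], (G ≃* H) → C G → C H
  has_nontrivial : ∃ (G : Type) (_ : Group G), C G ∧ Nontrivial G
  subgroup_closed : ∀ (G : Type) [Group G] (H : Subgroup G), C G → C H
  extension_closed : ∀ (G : Type) [Group G] (N : Subgroup G) [N.Normal],
    C N → C (G ⧸ N) → C G
  pi_closed : ∀ (X Y : Type) [Group X] [Group Y], C X → C Y → C (Y → X)

/-- `𝔓(C)`: the set of primes dividing the order of some element of some group in `C`. -/
def PrimesOf (C : GroupClass) : Set ℕ :=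
  {p | p.Prime ∧ ∃ (G : Type) (_ : Group G), C G ∧ ∃ g : G, p ∣ orderOf g}

/-- A natural number is a `P`-number: all its prime divisors lie in `P`. -/
def IsPNat (P : Set ℕ) (k : ℕ) : Prop := ∀ p : ℕ, p.Prime → p ∣ k → p ∈ P

/-- An integer is a `P`-number: all its prime divisors lie in `P`. -/
def IsPInt (P : Set ℕ) (k : ℤ) : Prop := ∀ p : ℕ, p.Prime → (p : ℤ) ∣ k → p ∈ P

/-- The class `𝓕_P` of finite groups whose order is a `P`-number. -/
def FClass (P : Set ℕ) (G : Type) [Group G] : Prop :=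
  Finite G ∧ IsPNat P (Nat.card G)

/-- The class `𝓕𝓢_P` of finite solvable groups whose order is a `P`-number. -/
def FSClass (P : Set ℕ) (G : Type) [Group G] : Prop :=
  Finite G ∧ IsSolvable G ∧ IsPNat P (Nat.card G)

/-- `X` is conjugacy `C`-separable. -/
def ConjSep (C : GroupClass) (X : Type) [Group X] : Prop :=
  ∀ x y : X, ¬IsConj x y →
    ∃ (G : Type) (_ : Group G), C G ∧
      ∃ σ : X →* G, Function.Surjective σ ∧ ¬IsConj (σ x) (σ y)

/-- `X` is residually a `C`-group. -/
def ResiduallyIn (C : GroupClass) (X : Type) [Group X] : Prop :=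
  ∀ x y : X, x ≠ y →
    ∃ (G : Type) (_ : Group G), C G ∧
      ∃ σ : X →* G, Function.Surjective σ ∧ σ x ≠ σ y

/-- `X` is residually finite. -/
def ResiduallyFinite (X : Type) [Group X] : Prop :=
  ∀ x y : X, x ≠ y →
    ∃ (G : Type) (_ : Group G), Finite G ∧
      ∃ σ : X →* G, Function.Surjective σ ∧ σ x ≠ σ y

/-- `X` is conjugacy (finite) separable. -/
def ConjugacySeparable (X : Type) [Group X] : Prop :=
  ∀ x y : X, ¬IsConj x y →
    ∃ (G : Type) (_ : Group G), Finite G ∧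
      ∃ σ : X →* G, Function.Surjective σ ∧ ¬IsConj (σ x) (σ y)

/-- `Ξ(n,P)`: positive `P`-numbers `s` such that `n ^ r ≡ 1 (mod s)` for some positive
`P`-number `r`. -/
def Xi (n : ℤ) (P : Set ℕ) : Set ℤ :=
  {s | 0 < s ∧ IsPInt P s ∧ ∃ r : ℤ, 0 < r ∧ IsPInt P r ∧ n ^ r.toNat ≡ 1 [ZMOD s]}

/-- `Ω(n,P)`: pairs `(r,s)` of positive `P`-numbers with `n ^ r ≡ 1 (mod s)`. -/
def OmegaP (n : ℤ) (P : Set ℕ) : Set (ℤ × ℤ) :=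
  {rs | 0 < rs.1 ∧ 0 < rs.2 ∧ IsPInt P rs.1 ∧ IsPInt P rs.2 ∧
    n ^ rs.1.toNat ≡ 1 [ZMOD rs.2]}


section BSAux

variable {G : Type*} [Group G]

private lemma bs_push1 {a t : G} {n : ℤ} (rel : t⁻¹ * a * t = a ^ n) (w : ℤ) :
    a ^ w * t = t * a ^ (n * w) := by
  have h : t⁻¹ * a ^ w * t = a ^ (n * w) := by
    have h1 : (t⁻¹ * a * t⁻¹⁻¹) ^ w = t⁻¹ * a ^ w * t⁻¹⁻¹ := conj_zpow
    rw [inv_inv] at h1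
    rw [← h1, rel, ← zpow_mul]
  calc a ^ w * t = t * (t⁻¹ * a ^ w * t) := by group
    _ = t * a ^ (n * w) := by rw [h]

private lemma bs_pushR {a t : G} {n : ℤ} (rel : t⁻¹ * a * t = a ^ n) (k : ℕ) (w : ℤ) :
    a ^ w * t ^ (k : ℤ) = t ^ (k : ℤ) * a ^ (n ^ k * w) := by
  induction k generalizing w with
  | zero => simp
  | succ m ih =>
    have : a ^ w * t ^ ((m : ℤ) + 1) = (a ^ w * t ^ (m : ℤ)) * t := by
      rw [zpow_add, zpow_one, mul_assoc]
    rw [show ((m + 1 : ℕ) : ℤ) = (m : ℤ) + 1 by push_cast; ring, this, ih,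
      mul_assoc, bs_push1 rel, ← mul_assoc, ← zpow_add_one]
    congr 1
    push_cast
    ring

private lemma bs_pushL {a t : G} {n : ℤ} (rel : t⁻¹ * a * t = a ^ n) (k : ℕ) (w : ℤ) :
    t ^ (-(k : ℤ)) * a ^ w = a ^ (n ^ k * w) * t ^ (-(k : ℤ)) := by
  have h := bs_pushR rel k w
  calc t ^ (-(k : ℤ)) * a ^ w
      = t ^ (-(k : ℤ)) * (a ^ w * t ^ (k : ℤ)) * t ^ (-(k : ℤ)) := by group
    _ = t ^ (-(k : ℤ)) * (t ^ (k : ℤ) * a ^ (n ^ k * w)) * t ^ (-(k : ℤ)) := by rw [h]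
    _ = a ^ (n ^ k * w) * t ^ (-(k : ℤ)) := by group

/-- The set of normal forms is a subgroup. -/
private def bsSub (a t : G) (n : ℤ) (rel : t⁻¹ * a * t = a ^ n) : Subgroup G where
  carrier := {g | ∃ (u v : ℕ) (w : ℤ), g = t ^ (u : ℤ) * a ^ w * t ^ (-(v : ℤ))}
  one_mem' := ⟨0, 0, 0, by simp⟩
  inv_mem' := by
    rintro g ⟨u, v, w, rfl⟩
    exact ⟨v, u, -w, by group⟩
  mul_mem' := by
    rintro g1 g2 ⟨u, v, w, rfl⟩ ⟨u', v', w', rfl⟩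
    rcases le_total v u' with h | h
    · obtain ⟨d, rfl⟩ := Nat.le.dest h
      refine ⟨u + d, v', n ^ d * w + w', ?_⟩
      have e1 : t ^ (u : ℤ) * a ^ w * t ^ (-(v : ℤ)) *
          (t ^ ((v + d : ℕ) : ℤ) * a ^ w' * t ^ (-(v' : ℤ)))
          = t ^ (u : ℤ) * (a ^ w * t ^ (d : ℤ)) * a ^ w' * t ^ (-(v' : ℤ)) := by
        push_cast
        group
      rw [e1, bs_pushR rel d w]
      push_cast
      group
    · obtain ⟨e, rfl⟩ := Nat.le.dest h
      refine ⟨u, e + v', w + n ^ e * w', ?_⟩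
      have e1 : t ^ (u : ℤ) * a ^ w * t ^ (-((u' + e : ℕ) : ℤ)) *
          (t ^ (u' : ℤ) * a ^ w' * t ^ (-(v' : ℤ)))
          = t ^ (u : ℤ) * a ^ w * (t ^ (-(e : ℤ)) * a ^ w') * t ^ (-(v' : ℤ)) := by
        push_cast
        group
      rw [e1, bs_pushL rel e w']
      push_cast
      group

/-- Main abstract lemma: normal form and conjugacy representatives. -/
private lemma bs_main {a t : G} {n : ℤ} (rel : t⁻¹ * a * t = a ^ n)
    (gen : ∀ g : G, g ∈ bsSub a t n rel) :
    (∀ g : G, ∃ (u v : ℕ) (w : ℤ), g = t ^ (u : ℤ) * a ^ w * t ^ (-(v : ℤ))) ∧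
    (∀ g : G, ∃ u v : ℤ, IsConj g (t ^ u * a ^ v)) := by
  have nf : ∀ g : G, ∃ (u v : ℕ) (w : ℤ), g = t ^ (u : ℤ) * a ^ w * t ^ (-(v : ℤ)) :=
    fun g => gen g
  refine ⟨nf, fun g => ?_⟩
  obtain ⟨u, v, w, rfl⟩ := nf g
  refine ⟨(u : ℤ) - v, w, isConj_iff.2 ⟨t ^ (-(v : ℤ)), ?_⟩⟩
  group

/-- Membership of elements of the subgroup: `a` and `t` are normal forms. -/
private lemma bs_a_mem {a t : G} {n : ℤ} (rel : t⁻¹ * a * t = a ^ n) :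
    a ∈ bsSub a t n rel := ⟨0, 0, 1, by simp⟩

private lemma bs_t_mem {a t : G} {n : ℤ} (rel : t⁻¹ * a * t = a ^ n) :
    t ∈ bsSub a t n rel := ⟨1, 0, 0, by simp⟩

end BSAux

private lemma bs_rel (n : ℤ) : (BSt 1 n)⁻¹ * BSa 1 n * BSt 1 n = BSa 1 n ^ n := by
  have hr : ((FreeGroup.of true)⁻¹ * (FreeGroup.of false) ^ (1 : ℤ) * FreeGroup.of true *
      (FreeGroup.of false) ^ (-n)) ∈ BSrels 1 n := rfl
  have h1 : PresentedGroup.mk (BSrels 1 n)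
      ((FreeGroup.of true)⁻¹ * (FreeGroup.of false) ^ (1 : ℤ) * FreeGroup.of true *
        (FreeGroup.of false) ^ (-n)) = 1 :=
    (QuotientGroup.eq_one_iff _).2 (Subgroup.subset_normalClosure hr)
  simp only [map_mul, map_inv, map_zpow, zpow_one] at h1
  have e : (BSt 1 n)⁻¹ * BSa 1 n * BSt 1 n * BSa 1 n ^ (-n) = 1 := h1
  calc (BSt 1 n)⁻¹ * BSa 1 n * BSt 1 n
      = ((BSt 1 n)⁻¹ * BSa 1 n * BSt 1 n * BSa 1 n ^ (-n)) * BSa 1 n ^ n := by group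
    _ = BSa 1 n ^ n := by rw [e, one_mul]

private lemma h_rel (n r s : ℤ) : (Ht n r s)⁻¹ * Ha n r s * Ht n r s = Ha n r s ^ n := by
  have hr : ((FreeGroup.of true)⁻¹ * FreeGroup.of false * FreeGroup.of true *
      (FreeGroup.of false) ^ (-n)) ∈ Hrels n r s := Or.inl rfl
  have h1 : PresentedGroup.mk (Hrels n r s)
      ((FreeGroup.of true)⁻¹ * FreeGroup.of false * FreeGroup.of true *
        (FreeGroup.of false) ^ (-n)) = 1 :=
    (QuotientGroup.eq_one_iff _).2 (Subgroup.subset_normalClosure hr)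
  simp only [map_mul, map_inv, map_zpow] at h1
  have e : (Ht n r s)⁻¹ * Ha n r s * Ht n r s * Ha n r s ^ (-n) = 1 := h1
  calc (Ht n r s)⁻¹ * Ha n r s * Ht n r s
      = ((Ht n r s)⁻¹ * Ha n r s * Ht n r s * Ha n r s ^ (-n)) * Ha n r s ^ n := by group
    _ = Ha n r s ^ n := by rw [e, one_mul]

/-- normal forms and conjugacy representatives in `BS(1,n)` and `H(n,r,s)`. -/
theorem stmt0 (n : ℤ) (hn : n ≠ 0) :
    ((∀ g : BS 1 n, ∃ (u v : ℕ) (w : ℤ),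
        g = BSt 1 n ^ (u : ℤ) * BSa 1 n ^ w * BSt 1 n ^ (-(v : ℤ))) ∧
      (∀ g : BS 1 n, ∃ u v : ℤ, IsConj g (BSt 1 n ^ u * BSa 1 n ^ v))) ∧
    (∀ r s : ℤ, 0 < r → 0 < s → n ^ r.toNat ≡ 1 [ZMOD s] →
      (∀ g : Hgrp n r s, ∃ (u v : ℕ) (w : ℤ),
        g = Ht n r s ^ (u : ℤ) * Ha n r s ^ w * Ht n r s ^ (-(v : ℤ))) ∧
      (∀ g : Hgrp n r s, ∃ u v : ℤ, IsConj g (Ht n r s ^ u * Ha n r s ^ v))) :=  by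
  have hBS := bs_main (bs_rel n) (fun g => PresentedGroup.generated_by (BSrels 1 n) _
    (fun j => by cases j
                 · exact bs_a_mem (bs_rel n)
                 · exact bs_t_mem (bs_rel n)) g)
  refine ⟨hBS, fun r s _ _ _ => ?_⟩
  exact bs_main (h_rel n r s) (fun g => PresentedGroup.generated_by (Hrels n r s) _
    (fun j => by cases j
                 · exact bs_a_mem (h_rel n r s)
                 · exact bs_t_mem (h_rel n r s)) g)
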